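/- Let G be a graph, u ∈ V(G), and i ≥ 1 an integer. Let x, y, z be three distinct vertices in N_i(u). Then there exists a set S ⊆ {u} ∪ N_1(u) ∪ ... ∪ N_{i−1}(u) such that the subgraph of G induced by S ∪ {x, y, z} is a confluence of {x, y, z}. -/

import Mathlib

open SimpleGraph

open SimpleGraph Walk

namespace SimpleGraph.Walk

variable {V : Type*} {G : SimpleGraph V}

/-- Take the first `n` darts of a walk. -/
def ttake {u v : V} : (p : G.Walk u v) → (n : ℕ) → G.Walk u (p.getVert n)
  | .nil, _ => .nil
  | .cons _ _, 0 => .nil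
  | .cons h q, n+1 => .cons h (q.ttake n)

/-- Drop the first `n` darts of a walk. -/
def ddrop {u v : V} : (p : G.Walk u v) → (n : ℕ) → G.Walk (p.getVert n) v
  | .nil, _ => .nil
  | .cons h q, 0 => .cons h q
  | .cons _ q, n+1 => q.ddrop n

lemma ttake_append_ddrop {u v : V} : ∀ (p : G.Walk u v) (n : ℕ),
    (p.ttake n).append (p.ddrop n) = p
  | .nil, _ => rfl
  | .cons _ _, 0 => rfl
  | .cons h q, n+1 => by
      show Walk.cons h ((q.ttake n).append (q.ddrop n)) = _
      rw [ttake_append_ddrop]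

lemma length_ttake {u v : V} : ∀ (p : G.Walk u v) (n : ℕ), n ≤ p.length →
    (p.ttake n).length = n
  | .nil, 0, _ => rfl
  | .cons _ _, 0, _ => rfl
  | .cons h q, n+1, hn => by
      show (q.ttake n).length + 1 = n + 1
      rw [length_ttake q n (by simpa using hn)]

lemma length_ddrop {u v : V} : ∀ (p : G.Walk u v) (n : ℕ),
    (p.ddrop n).length = p.length - n
  | .nil, _ => by simp [ddrop]
  | .cons _ _, 0 => rfl
  | .cons h q, n+1 => by
      show (q.ddrop n).length = q.length + 1 - (n+1)
      rw [length_ddrop q n]; omega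

lemma getVert_ttake {u v : V} : ∀ (p : G.Walk u v) (n i : ℕ), i ≤ n →
    (p.ttake n).getVert i = p.getVert i
  | .nil, _, _, _ => by simp [ttake, getVert]
  | .cons _ _, 0, i, hi => by
      interval_cases i; rfl
  | .cons h q, n+1, 0, _ => rfl
  | .cons h q, n+1, i+1, hi => by
      show (q.ttake n).getVert i = q.getVert i
      exact getVert_ttake q n i (by omega)

lemma getVert_ddrop {u v : V} : ∀ (p : G.Walk u v) (n i : ℕ),
    (p.ddrop n).getVert i = p.getVert (n + i)
  | .nil, _, _ => by simp [ddrop, getVert]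
  | .cons _ _, 0, i => by
      show (cons _ _).getVert i = (cons _ _).getVert (0 + i)
      rw [Nat.zero_add]; rfl
  | .cons h q, n+1, i => by
      show (q.ddrop n).getVert i = (cons h q).getVert (n + 1 + i)
      rw [show n + 1 + i = (n + i) + 1 by omega, getVert_cons_succ]
      exact getVert_ddrop q n i

lemma getVert_injOn' {u v : V} : ∀ {p : G.Walk u v}, p.IsPath →
    ∀ i, i ≤ p.length → ∀ j, j ≤ p.length → p.getVert i = p.getVert j → i = j
  | .nil, _, i, hi, j, hj, _ => by simp at hi hj; omega
  | .cons h q, hp, 0, hi, 0, hj, _ => rfl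
  | .cons h q, hp, 0, hi, j+1, hj, hij => by
      rw [cons_isPath_iff] at hp
      have hju : q.getVert j = u := by
        have : (cons h q).getVert (j+1) = q.getVert j := getVert_cons_succ q h
        rw [← this, ← hij, getVert_zero]
      exact absurd (mem_support_iff_exists_getVert.2 ⟨j, hju, by simpa using hj⟩) hp.2
  | .cons h q, hp, i+1, hi, 0, hj, hij => by
      rw [cons_isPath_iff] at hp
      have hiu : q.getVert i = u := by
        have : (cons h q).getVert (i+1) = q.getVert i := getVert_cons_succ q h
        rw [← this, hij, getVert_zero]
      exact absurd (mem_support_iff_exists_getVert.2 ⟨i, hiu, by simpa using hi⟩) hp.2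
  | .cons h q, hp, i+1, hi, j+1, hj, hij => by
      rw [cons_isPath_iff] at hp
      have := getVert_injOn' hp.1 i (by simpa using hi) j (by simpa using hj)
        (by rw [← getVert_cons_succ q h, ← getVert_cons_succ q h]; exact hij)
      omega

lemma mem_edges_iff' {u v : V} : ∀ {p : G.Walk u v} {e : Sym2 V},
    e ∈ p.edges ↔ ∃ i, i < p.length ∧ e = s(p.getVert i, p.getVert (i+1))
  | .nil, e => by simp
  | .cons h q, e => by
      rw [edges_cons, List.mem_cons, mem_edges_iff']
      constructor
      · rintro (rfl | ⟨i, hi, rfl⟩)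
        · exact ⟨0, by simp [getVert], by rw [getVert_zero, getVert_cons_succ, getVert_zero]⟩
        · exact ⟨i+1, by simp only [length_cons]; omega, by rw [getVert_cons_succ, getVert_cons_succ]⟩
      · rintro ⟨i, hi, rfl⟩
        cases i with
        | zero => left; rw [getVert_zero, getVert_cons_succ, getVert_zero]
        | succ i => right; exact ⟨i, by simp only [length_cons] at hi; omega,
            by rw [getVert_cons_succ, getVert_cons_succ]⟩

end SimpleGraph.Walk

open SimpleGraph Walk

namespace SimpleGraph.Walk

variable {V : Type*} {G : SimpleGraph V} {u v a : V} {e : Sym2 V} {n i : ℕ} {p : G.Walk u v}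

lemma isPath_ttake (hp : p.IsPath) (n : ℕ) : (p.ttake n).IsPath := by
  rw [← ttake_append_ddrop p n] at hp
  exact hp.of_append_left

lemma isPath_ddrop (hp : p.IsPath) (n : ℕ) : (p.ddrop n).IsPath := by
  rw [← ttake_append_ddrop p n] at hp
  exact hp.of_append_right

lemma mem_support_ttake_iff (hn : n ≤ p.length) :
    a ∈ (p.ttake n).support ↔ ∃ i, i ≤ n ∧ p.getVert i = a := by
  rw [mem_support_iff_exists_getVert]
  constructor
  · rintro ⟨i, hv, hl⟩
    rw [length_ttake _ _ hn] at hl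
    exact ⟨i, hl, by rw [← getVert_ttake _ _ _ hl]; exact hv⟩
  · rintro ⟨i, hl, hv⟩
    exact ⟨i, by rw [getVert_ttake _ _ _ hl]; exact hv, by rw [length_ttake _ _ hn]; exact hl⟩

lemma mem_support_ddrop_iff (hn : n ≤ p.length) :
    a ∈ (p.ddrop n).support ↔ ∃ i, n ≤ i ∧ i ≤ p.length ∧ p.getVert i = a := by
  rw [mem_support_iff_exists_getVert]
  constructor
  · rintro ⟨k, hv, hl⟩
    rw [length_ddrop] at hl
    refine ⟨n + k, by omega, by omega, by rw [← getVert_ddrop]; exact hv⟩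
  · rintro ⟨i, hni, hil, hv⟩
    refine ⟨i - n, ?_, by rw [length_ddrop]; omega⟩
    rw [getVert_ddrop, show n + (i - n) = i by omega]; exact hv

lemma edges_ttake_or_ddrop (n : ℕ) (he : e ∈ p.edges) :
    e ∈ (p.ttake n).edges ∨ e ∈ (p.ddrop n).edges := by
  conv at he => rw [← ttake_append_ddrop p n]
  rw [edges_append, List.mem_append] at he
  exact he

lemma edge_mem_ttake (hn : n ≤ p.length) (hi : i + 1 ≤ n) :
    s(p.getVert i, p.getVert (i + 1)) ∈ (p.ttake n).edges :=
  mem_edges_iff'.2 ⟨i, by rw [length_ttake _ _ hn]; omega,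
    by rw [getVert_ttake _ _ _ (by omega : i ≤ n), getVert_ttake _ _ _ hi]⟩

lemma edge_mem_ddrop (hni : n ≤ i) (hi : i < p.length) :
    s(p.getVert i, p.getVert (i + 1)) ∈ (p.ddrop n).edges :=
  mem_edges_iff'.2 ⟨i - n, by rw [length_ddrop]; omega,
    by rw [getVert_ddrop, getVert_ddrop, show n + (i - n) = i by omega,
      show n + (i - n + 1) = i + 1 by omega]⟩

lemma support_ttake_subset (n : ℕ) (ha : a ∈ (p.ttake n).support) : a ∈ p.support := by
  rw [← ttake_append_ddrop p n]
  exact subset_support_append_left _ _ ha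

lemma support_ddrop_subset (n : ℕ) (ha : a ∈ (p.ddrop n).support) : a ∈ p.support := by
  rw [← ttake_append_ddrop p n]
  exact subset_support_append_right _ _ ha

lemma consec_of_min (hmin : ∀ q : G.Walk u v, p.length ≤ q.length) {i j : ℕ}
    (hij : i < j) (hj : j ≤ p.length) (hadj : G.Adj (p.getVert i) (p.getVert j)) :
    j = i + 1 := by
  by_contra h
  have hshort := hmin ((p.ttake i).append (Walk.cons hadj (p.ddrop j)))
  rw [length_append, length_ttake _ _ (by omega), length_cons, length_ddrop] at hshort
  omega

lemma exists_consec_of_adj {b : V} (hp : p.IsPath)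
    (hmin : ∀ q : G.Walk u v, p.length ≤ q.length)
    (ha : a ∈ p.support) (hb : b ∈ p.support) (hadj : G.Adj a b) :
    ∃ i, i < p.length ∧ s(a, b) = s(p.getVert i, p.getVert (i + 1)) ∧
      ((a = p.getVert i ∧ b = p.getVert (i + 1)) ∨
       (b = p.getVert i ∧ a = p.getVert (i + 1))) := by
  obtain ⟨ia, hva, hla⟩ := mem_support_iff_exists_getVert.1 ha
  obtain ⟨ib, hvb, hlb⟩ := mem_support_iff_exists_getVert.1 hb
  have hne : ia ≠ ib := fun h => hadj.ne (by rw [← hva, ← hvb, h])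
  rcases lt_or_gt_of_ne hne with hlt | hgt
  · have hc := consec_of_min hmin hlt hlb (by rw [hva, hvb]; exact hadj)
    exact ⟨ia, by omega, by rw [hva, ← hc, hvb], Or.inl ⟨hva.symm, by rw [← hc, hvb]⟩⟩
  · have hc := consec_of_min hmin hgt hla (by rw [hva, hvb]; exact hadj.symm)
    refine ⟨ib, by omega, ?_, Or.inr ⟨hvb.symm, by rw [← hc, hva]⟩⟩
    rw [Sym2.eq_swap, hvb, ← hc, hva]

end SimpleGraph.Walk


/-- A witness that the graph `H` is (exactly) a subdivision of `K₄`: four distinct branch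
vertices joined by six internally disjoint paths of length at least one, covering all
vertices and edges of `H`. -/
structure K4Subdivision {W : Type*} (H : SimpleGraph W) : Type _ where
  b : Fin 4 → W
  inj : Function.Injective b
  p : ∀ i j : Fin 4, i < j → H.Walk (b i) (b j)
  isPath : ∀ (i j : Fin 4) (h : i < j), (p i j h).IsPath
  len : ∀ (i j : Fin 4) (h : i < j), 1 ≤ (p i j h).length
  disj : ∀ (i j : Fin 4) (h : i < j), ∀ (k l : Fin 4) (h' : k < l), (i, j) ≠ (k, l) → ∀ v,
      v ∈ (p i j h).support → v ∈ (p k l h').support → v = b i ∨ v = b j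
  coverV : ∀ v, ∃ (i j : Fin 4) (h : i < j), v ∈ (p i j h).support
  coverE : ∀ e ∈ H.edgeSet, ∃ (i j : Fin 4) (h : i < j), e ∈ (p i j h).edges

/-- A graph is ISK4-free if no induced subgraph is a subdivision of `K₄`. -/
def ISK4Free {V : Type*} (G : SimpleGraph V) : Prop :=
  ∀ s : Set V, IsEmpty (K4Subdivision (G.induce s))

/-- `G` has no induced `K_{3,3}`. -/
def K33Free {V : Type*} (G : SimpleGraph V) : Prop :=
  IsEmpty (completeBipartiteGraph (Fin 3) (Fin 3) ↪g G)

/-- `G` has no induced `K_{2,2,2}` (octahedron). -/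
def K222Free {V : Type*} (G : SimpleGraph V) : Prop :=
  IsEmpty (completeMultipartiteGraph (fun _ : Fin 3 => Fin 2) ↪g G)

/-- A witness that `H` is (exactly) a prism: three vertex-disjoint paths of length at least
one whose ends form two triangles, with no other edges. -/
structure PrismStruct {W : Type*} (H : SimpleGraph W) : Type _ where
  a : Fin 3 → W
  b : Fin 3 → W
  p : ∀ i, H.Walk (a i) (b i)
  isPath : ∀ i, (p i).IsPath
  len : ∀ i, 1 ≤ (p i).length
  triA : ∀ i j, i ≠ j → H.Adj (a i) (a j)
  triB : ∀ i j, i ≠ j → H.Adj (b i) (b j)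
  disj : ∀ i j, i ≠ j → ∀ v, v ∈ (p i).support → v ∉ (p j).support
  coverV : ∀ v, ∃ i, v ∈ (p i).support
  coverE : ∀ e ∈ H.edgeSet, (∃ i, e ∈ (p i).edges) ∨
      (∃ i j, i ≠ j ∧ e = s(a i, a j)) ∨ (∃ i j, i ≠ j ∧ e = s(b i, b j))

/-- `G` has no induced prism. -/
def PrismFree {V : Type*} (G : SimpleGraph V) : Prop :=
  ∀ s : Set V, IsEmpty (PrismStruct (G.induce s))

/-- `C` is the vertex set of a hole (an induced cycle on at least four vertices) of `G`. -/
def IsHole {V : Type*} (G : SimpleGraph V) (C : Set V) : Prop :=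
  ∃ (v : V) (w : G.Walk v v), w.IsCycle ∧ 4 ≤ w.length ∧
    (∀ x, x ∈ C ↔ x ∈ w.support) ∧
    (∀ x ∈ C, ∀ y ∈ C, G.Adj x y → s(x, y) ∈ w.edges)

/-- `G` contains no induced boat: no hole together with a vertex having exactly four
consecutive neighbours on the hole. -/
def BoatFree {V : Type*} (G : SimpleGraph V) : Prop :=
  ¬ ∃ (C : Set V) (v v₀ x₁ x₂ x₃ x₄ : V) (w : G.Walk v₀ v₀),
      w.IsCycle ∧ 4 ≤ w.length ∧ (∀ x, x ∈ C ↔ x ∈ w.support) ∧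
      (∀ x ∈ C, ∀ y ∈ C, G.Adj x y → s(x, y) ∈ w.edges) ∧
      v ∉ C ∧ [x₁, x₂, x₃, x₄].Nodup ∧
      s(x₁, x₂) ∈ w.edges ∧ s(x₂, x₃) ∈ w.edges ∧ s(x₃, x₄) ∈ w.edges ∧
      {x ∈ C | G.Adj v x} = {x₁, x₂, x₃, x₄}

/-- `G` contains no induced 4-wheel: no induced four-cycle together with a vertex adjacent
to all four of its vertices. -/
def FourWheelFree {V : Type*} (G : SimpleGraph V) : Prop :=
  ¬ ∃ v a b c d : V, a ≠ b ∧ a ≠ c ∧ a ≠ d ∧ b ≠ c ∧ b ≠ d ∧ c ≠ d ∧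
      G.Adj a b ∧ G.Adj b c ∧ G.Adj c d ∧ G.Adj d a ∧ ¬ G.Adj a c ∧ ¬ G.Adj b d ∧
      G.Adj v a ∧ G.Adj v b ∧ G.Adj v c ∧ G.Adj v d

/-- The subgraph of `G` induced on `T` is a confluence of `{x, y, z}`. -/
def IsConfluence {V : Type*} (G : SimpleGraph V) (T : Set V) (x y z : V) : Prop :=
  (∃ (c : V) (px : G.Walk c x) (py : G.Walk c y) (pz : G.Walk c z),
    px.IsPath ∧ py.IsPath ∧ pz.IsPath ∧
    (∀ v, v ∈ px.support → v ∈ py.support → v = c) ∧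
    (∀ v, v ∈ px.support → v ∈ pz.support → v = c) ∧
    (∀ v, v ∈ py.support → v ∈ pz.support → v = c) ∧
    (∀ v, v ∈ T ↔ (v ∈ px.support ∨ v ∈ py.support ∨ v ∈ pz.support)) ∧
    (∀ a ∈ T, ∀ b ∈ T, G.Adj a b →
      s(a, b) ∈ px.edges ∨ s(a, b) ∈ py.edges ∨ s(a, b) ∈ pz.edges))
  ∨
  (∃ (x' y' z' : V) (px : G.Walk x' x) (py : G.Walk y' y) (pz : G.Walk z' z),
    px.IsPath ∧ py.IsPath ∧ pz.IsPath ∧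
    G.Adj x' y' ∧ G.Adj y' z' ∧ G.Adj x' z' ∧
    (∀ v, v ∈ px.support → v ∉ py.support) ∧
    (∀ v, v ∈ px.support → v ∉ pz.support) ∧
    (∀ v, v ∈ py.support → v ∉ pz.support) ∧
    (∀ v, v ∈ T ↔ (v ∈ px.support ∨ v ∈ py.support ∨ v ∈ pz.support)) ∧
    (∀ a ∈ T, ∀ b ∈ T, G.Adj a b →
      s(a, b) ∈ px.edges ∨ s(a, b) ∈ py.edges ∨ s(a, b) ∈ pz.edges ∨
      s(a, b) = s(x', y') ∨ s(a, b) = s(y', z') ∨ s(a, b) = s(x', z')))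

/-- Any three distinct vertices at distance exactly `i ≥ 1` from `u` admit a confluence whose
extra vertices all lie in the layers `{u} ∪ N₁(u) ∪ ⋯ ∪ N_{i-1}(u)`. -/
theorem exists_confluence_aux {W : Type*} (H : SimpleGraph W) (x y z : W)
    (hrxy : H.Reachable x y) (hryz : H.Reachable y z) :
    ∃ T : Set W, IsConfluence H T x y z := by
  classical
  obtain ⟨Q, hQp, hQl⟩ := hryz.exists_path_of_dist
  have hQmin : ∀ q : H.Walk y z, Q.length ≤ q.length := fun q => by
    rw [hQl]; exact SimpleGraph.dist_le q
  by_cases hxQ : x ∈ Q.support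
  · -- Case A : x lies on Q
    obtain ⟨ix, hixv, hixl⟩ := mem_support_iff_exists_getVert.1 hxQ
    set py : H.Walk x y := ((Q.ttake ix).copy rfl hixv).reverse with hpy
    set pz : H.Walk x z := (Q.ddrop ix).copy hixv rfl with hpz
    have hpyQ : ∀ v ∈ py.support, ∃ i, i ≤ ix ∧ Q.getVert i = v := by
      intro v hv
      rw [hpy, support_reverse, List.mem_reverse, support_copy,
        mem_support_ttake_iff hixl] at hv
      exact hv
    have hpzQ : ∀ v ∈ pz.support, ∃ i, ix ≤ i ∧ i ≤ Q.length ∧ Q.getVert i = v := by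
      intro v hv
      rw [hpz, support_copy, mem_support_ddrop_iff hixl] at hv
      exact hv
    refine ⟨_, Or.inl ⟨x, Walk.nil, py, pz, Walk.IsPath.nil,
      (((Q.ttake ix).isPath_copy rfl hixv).2 (isPath_ttake hQp ix)).reverse,
      ((Q.ddrop ix).isPath_copy hixv rfl).2 (isPath_ddrop hQp ix),
      ?_, ?_, ?_, fun v => Iff.rfl, ?_⟩⟩
    · intro v hv _; simpa using hv
    · intro v hv _; simpa using hv
    · intro v hv hv'
      obtain ⟨i, hi, hvi⟩ := hpyQ v hv
      obtain ⟨j, hj, hjl, hvj⟩ := hpzQ v hv'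
      have := getVert_injOn' hQp i (by omega) j hjl (by rw [hvi, hvj])
      rw [← hvi, show i = ix by omega, hixv]
    · intro a ha b hb hadj
      have hQs : ∀ c, (c ∈ (Walk.nil : H.Walk x x).support ∨ c ∈ py.support ∨
          c ∈ pz.support) → c ∈ Q.support := by
        rintro c (hc | hc | hc)
        · simp at hc; subst hc; exact hxQ
        · obtain ⟨i, hi, hvi⟩ := hpyQ c hc
          exact mem_support_iff_exists_getVert.2 ⟨i, hvi, by omega⟩
        · obtain ⟨i, _, hi, hvi⟩ := hpzQ c hc
          exact mem_support_iff_exists_getVert.2 ⟨i, hvi, hi⟩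
      obtain ⟨i, hil, hse, _⟩ :=
        exists_consec_of_adj hQp hQmin (hQs a ha) (hQs b hb) hadj
      rcases edges_ttake_or_ddrop (p := Q) ix (mem_edges_iff'.2 ⟨i, hil, hse⟩) with he | he
      · right; left; rw [hpy, edges_reverse, List.mem_reverse, edges_copy]; exact he
      · right; right; rw [hpz, edges_copy]; exact he
  · -- Case B : x off Q
    obtain ⟨wxy⟩ := hrxy
    set L : Set ℕ :=
      {n | ∃ (v : W) (_ : v ∈ Q.support) (p : H.Walk x v), p.IsPath ∧ p.length = n} with hLdef
    have hLne : L.Nonempty :=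
      ⟨wxy.bypass.length, y, Q.start_mem_support, wxy.bypass, wxy.bypass_isPath, rfl⟩
    obtain ⟨q0, hq0Q, R, hRp, hRl⟩ := Nat.sInf_mem hLne
    have hminL : ∀ k ∈ L, sInf L ≤ k := fun k hk => Nat.sInf_le hk
    have hm1 : 1 ≤ R.length := by
      rcases Nat.eq_zero_or_pos R.length with h0 | h
      · have hx0 : x = q0 := Walk.eq_of_length_eq_zero h0
        rw [← hx0] at hq0Q; exact absurd hq0Q hxQ
      · exact h
    have hP1 : ∀ i, i ≤ R.length → R.getVert i ∈ Q.support → i = R.length := by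
      intro i hi hQi
      have hiL : i ∈ L := ⟨R.getVert i, hQi, R.ttake i, isPath_ttake hRp i, length_ttake R i hi⟩
      have := hminL i hiL
      omega
    have hRmin : ∀ q : H.Walk x q0, R.length ≤ q.length := by
      intro q
      have hq : q.bypass.length ∈ L := ⟨q0, hq0Q, q.bypass, q.bypass_isPath, rfl⟩
      have h1 := hminL _ hq
      have h2 := q.length_bypass_le
      omega
    have hP3 : ∀ i, i + 1 < R.length → ∀ q ∈ Q.support, ¬ H.Adj (R.getVert i) q := by
      intro i hi q hq hadj
      have hwalk : ((R.ttake i).append (Walk.cons hadj Walk.nil)).bypass.length ∈ L :=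
        ⟨q, hq, _, Walk.bypass_isPath _, rfl⟩
      have h1 := hminL _ hwalk
      have h2 := Walk.length_bypass_le ((R.ttake i).append (Walk.cons hadj Walk.nil))
      rw [length_append, length_ttake R i (by omega), length_cons, length_nil] at h2
      omega
    set w : W := R.getVert (R.length - 1) with hwdef
    set R' : H.Walk x w := R.ttake (R.length - 1) with hR'def
    have hR'p : R'.IsPath := isPath_ttake hRp _
    have hR'len : R.length - 1 ≤ R.length := by omega
    have hR'mem : ∀ v ∈ R'.support, ∃ i, i ≤ R.length - 1 ∧ R.getVert i = v := fun v hv =>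
      (mem_support_ttake_iff hR'len).1 hv
    have hR'Q : ∀ v ∈ R'.support, v ∉ Q.support := by
      intro v hv hvQ
      obtain ⟨i, hi, hvi⟩ := hR'mem v hv
      have := hP1 i (by omega) (by rw [hvi]; exact hvQ)
      omega
    have hwadj : H.Adj w (R.getVert R.length) := by
      have := R.adj_getVert_succ (i := R.length - 1) (by omega)
      rwa [show R.length - 1 + 1 = R.length by omega] at this
    have hq0v : R.getVert R.length = q0 := R.getVert_length
    rw [hq0v] at hwadj
    set N : Set ℕ := {j | j ≤ Q.length ∧ H.Adj w (Q.getVert j)} with hNdef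
    obtain ⟨jq0, hjq0v, hjq0l⟩ := mem_support_iff_exists_getVert.1 hq0Q
    have hNne : N.Nonempty := ⟨jq0, hjq0l, by rw [hjq0v]; exact hwadj⟩
    have hNbdd : BddAbove N := ⟨Q.length, fun j hj => hj.1⟩
    set j1 : ℕ := sInf N with hj1def
    set j2 : ℕ := sSup N with hj2def
    have hj1 : j1 ∈ N := Nat.sInf_mem hNne
    have hj2 : j2 ∈ N := Nat.sSup_mem hNne hNbdd
    have hj1le : ∀ j ∈ N, j1 ≤ j := fun j hj => Nat.sInf_le hj
    have hj2ge : ∀ j ∈ N, j ≤ j2 := fun j hj => le_csSup hNbdd hj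
    have hj12 : j1 ≤ j2 := hj2ge j1 hj1
    have hj1l : j1 ≤ Q.length := hj1.1
    have hj2l : j2 ≤ Q.length := hj2.1
    have hwQ : w ∉ Q.support := by
      intro h
      have := hP1 (R.length - 1) (by omega) h
      omega
    have hwR' : w ∈ R'.support := by
      rw [hR'def]; exact Walk.end_mem_support _
    have hQmem : ∀ {c : W}, c ∈ Q.support ↔ ∃ i, i ≤ Q.length ∧ Q.getVert i = c := by
      intro c; rw [mem_support_iff_exists_getVert]
      exact ⟨fun ⟨i, h1, h2⟩ => ⟨i, h2, h1⟩, fun ⟨i, h1, h2⟩ => ⟨i, h2, h1⟩⟩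
    have hNidx : ∀ b ∈ Q.support, H.Adj w b →
        ∃ j, j1 ≤ j ∧ j ≤ j2 ∧ j ≤ Q.length ∧ Q.getVert j = b := by
      intro b hb hadj
      obtain ⟨j, hjl, hjv⟩ := hQmem.1 hb
      have hjN : j ∈ N := ⟨hjl, by rw [hjv]; exact hadj⟩
      exact ⟨j, hj1le j hjN, hj2ge j hjN, hjl, hjv⟩
    have hq1Q : Q.getVert j1 ∈ Q.support := hQmem.2 ⟨j1, hj1.1, rfl⟩
    have hq2Q : Q.getVert j2 ∈ Q.support := hQmem.2 ⟨j2, hj2.1, rfl⟩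
    set arcY : H.Walk (Q.getVert j1) y := (Q.ttake j1).reverse with harcYdef
    set arcZ : H.Walk (Q.getVert j2) z := Q.ddrop j2 with harcZdef
    have harcYp : arcY.IsPath := (isPath_ttake hQp _).reverse
    have harcZp : arcZ.IsPath := isPath_ddrop hQp _
    have harcYmem : ∀ v ∈ arcY.support, ∃ i, i ≤ j1 ∧ Q.getVert i = v := by
      intro v hv
      rw [harcYdef, support_reverse, List.mem_reverse] at hv
      exact (mem_support_ttake_iff hj1.1).1 hv
    have harcZmem : ∀ v ∈ arcZ.support, ∃ i, j2 ≤ i ∧ i ≤ Q.length ∧ Q.getVert i = v := by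
      intro v hv
      rw [harcZdef] at hv
      exact (mem_support_ddrop_iff hj2.1).1 hv
    have harcYQ : ∀ v ∈ arcY.support, v ∈ Q.support := by
      intro v hv
      obtain ⟨i, hi, hvi⟩ := harcYmem v hv
      exact hQmem.2 ⟨i, by omega, hvi⟩
    have harcZQ : ∀ v ∈ arcZ.support, v ∈ Q.support := by
      intro v hv
      obtain ⟨i, _, hi, hvi⟩ := harcZmem v hv
      exact hQmem.2 ⟨i, hi, hvi⟩
    have hYZ : ∀ v, v ∈ arcY.support → v ∈ arcZ.support → j2 ≤ j1 ∧ v = Q.getVert j1 := by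
      intro v h1 h2
      obtain ⟨i, hi, hvi⟩ := harcYmem v h1
      obtain ⟨j, hj, hjl, hvj⟩ := harcZmem v h2
      have hij := getVert_injOn' hQp i (by omega) j hjl (by rw [hvi, hvj])
      have hi1 : i = j1 := by omega
      exact ⟨by omega, by rw [← hvi, hi1]⟩
    have hidx : ∀ c, (∃ ic, (ic ≤ j1 ∨ j2 ≤ ic) ∧ ic ≤ Q.length ∧ Q.getVert ic = c) →
        ∀ k, k ≤ Q.length → Q.getVert k = c → (k ≤ j1 ∨ j2 ≤ k) := by
      rintro c ⟨ic, hic, hicl, hicv⟩ k hk hkv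
      have := getVert_injOn' hQp ic hicl k hk (by rw [hicv, hkv])
      omega
    have hRR : ∀ a ∈ R'.support, ∀ b ∈ R'.support, H.Adj a b → s(a, b) ∈ R'.edges := by
      intro a ha b hb hadj
      obtain ⟨i, hil, hse, hor⟩ := exists_consec_of_adj hRp hRmin
        (support_ttake_subset _ ha) (support_ttake_subset _ hb) hadj
      obtain ⟨ia, hia, hva⟩ := hR'mem a ha
      obtain ⟨ib, hib, hvb⟩ := hR'mem b hb
      have hlast : i + 1 ≤ R.length - 1 := by
        rcases hor with ⟨h1, h2⟩ | ⟨h1, h2⟩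
        · have := getVert_injOn' hRp (i+1) (by omega) ib (by omega) (by rw [← h2, hvb])
          omega
        · have := getVert_injOn' hRp (i+1) (by omega) ia (by omega) (by rw [← h2, hva])
          omega
      rw [hse, hR'def]
      exact edge_mem_ttake hR'len hlast
    have hR'nbr : ∀ a ∈ R'.support, a ≠ w → ∀ q ∈ Q.support, ¬ H.Adj a q := by
      intro a ha hne q hq hadj
      obtain ⟨i, hi, hvi⟩ := hR'mem a ha
      have hiw : i ≠ R.length - 1 := by
        intro h; rw [h] at hvi; exact hne hvi.symm
      exact hP3 i (by omega) q hq (by rw [hvi]; exact hadj)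
    have haw : ∀ a ∈ R'.support, ∀ b ∈ Q.support, H.Adj a b → a = w := by
      intro a ha b hb hadj
      by_contra hne
      exact hR'nbr a ha hne b hb hadj
    have hwq1 : H.Adj w (Q.getVert j1) := hj1.2
    have hwq2 : H.Adj w (Q.getVert j2) := hj2.2
    have hq1R' : Q.getVert j1 ∉ R'.support := fun h => hR'Q _ h hq1Q
    by_cases hcase : j2 = j1
    · -- B1 : unique neighbour, type 1 with centre q1
      have hq21 : Q.getVert j2 = Q.getVert j1 := by rw [hcase]
      refine ⟨_, Or.inl ⟨Q.getVert j1, Walk.cons hwq1.symm R'.reverse, arcY,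
        arcZ.copy hq21 rfl,
        hR'p.reverse.cons (by rw [support_reverse, List.mem_reverse]; exact hq1R'),
        harcYp, (arcZ.isPath_copy hq21 rfl).2 harcZp, ?_, ?_, ?_, fun v => Iff.rfl, ?_⟩⟩
      · intro v hv hv'
        rw [support_cons, List.mem_cons] at hv
        rcases hv with hv | hv
        · exact hv
        · rw [support_reverse, List.mem_reverse] at hv
          exact absurd (harcYQ v hv') (hR'Q v hv)
      · intro v hv hv'
        rw [support_copy] at hv'
        rw [support_cons, List.mem_cons] at hv
        rcases hv with hv | hv
        · exact hv
        · rw [support_reverse, List.mem_reverse] at hv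
          exact absurd (harcZQ v hv') (hR'Q v hv)
      · intro v hv hv'
        rw [support_copy] at hv'
        exact (hYZ v hv hv').2
      · intro a ha b hb hadj
        have hsplit : ∀ c, (c ∈ (Walk.cons hwq1.symm R'.reverse).support ∨
            c ∈ arcY.support ∨ c ∈ (arcZ.copy hq21 rfl).support) →
            c ∈ R'.support ∨ c ∈ Q.support := by
          rintro c (hc | hc | hc)
          · rw [support_cons, List.mem_cons] at hc
            rcases hc with hc | hc
            · right; rw [hc]; exact hq1Q
            · left; rwa [support_reverse, List.mem_reverse] at hc
          · right; exact harcYQ c hc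
          · right; rw [support_copy] at hc; exact harcZQ c hc
        have hmix : ∀ a' ∈ R'.support, ∀ b' ∈ Q.support, H.Adj a' b' →
            s(a', b') ∈ (Walk.cons hwq1.symm R'.reverse).edges := by
          intro a' ha' b' hb' hadj'
          have haw' : a' = w := haw a' ha' b' hb' hadj'
          obtain ⟨j, hjl1, hjl2, hjl, hjv⟩ := hNidx b' hb' (by rw [← haw']; exact hadj')
          have hjj1 : j = j1 := by omega
          rw [edges_cons, List.mem_cons]
          left
          rw [haw', ← hjv, hjj1, Sym2.eq_swap]
        rcases hsplit a ha with haR | haQ <;> rcases hsplit b hb with hbR | hbQ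
        · left
          rw [edges_cons, List.mem_cons]; right
          rw [edges_reverse, List.mem_reverse]
          exact hRR a haR b hbR hadj
        · left; exact hmix a haR b hbQ hadj
        · left; rw [Sym2.eq_swap]; exact hmix b hbR a haQ hadj.symm
        · obtain ⟨i, hil, hse, _⟩ := exists_consec_of_adj hQp hQmin haQ hbQ hadj
          rcases le_or_gt (i + 1) j1 with h | h
          · right; left
            rw [hse, harcYdef, edges_reverse, List.mem_reverse]
            exact edge_mem_ttake hj1l h
          · right; right
            rw [hse, edges_copy, harcZdef]
            exact edge_mem_ddrop (by omega) hil
    · -- B2 : j1 < j2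
      have hj12' : j1 < j2 := lt_of_le_of_ne hj12 (fun h => hcase h.symm)
      have hsplit : ∀ c, (c ∈ R'.support ∨ c ∈ arcY.support ∨ c ∈ arcZ.support) →
          c ∈ R'.support ∨ (∃ ic, (ic ≤ j1 ∨ j2 ≤ ic) ∧ ic ≤ Q.length ∧ Q.getVert ic = c) := by
        rintro c (hc | hc | hc)
        · exact Or.inl hc
        · obtain ⟨i, hi, hvi⟩ := harcYmem c hc
          exact Or.inr ⟨i, Or.inl hi, by omega, hvi⟩
        · obtain ⟨i, hi, hil, hvi⟩ := harcZmem c hc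
          exact Or.inr ⟨i, Or.inr hi, hil, hvi⟩
      have hmix : ∀ a' ∈ R'.support, ∀ b',
          (∃ ic, (ic ≤ j1 ∨ j2 ≤ ic) ∧ ic ≤ Q.length ∧ Q.getVert ic = b') → H.Adj a' b' →
          (a' = w ∧ (b' = Q.getVert j1 ∨ b' = Q.getVert j2)) := by
        rintro a' ha' b' ⟨ic, hic, hicl, hicv⟩ hadj'
        have hbQ : b' ∈ Q.support := hQmem.2 ⟨ic, hicl, hicv⟩
        have haw' : a' = w := haw a' ha' b' hbQ hadj'
        obtain ⟨j, hjl1, hjl2, hjl, hjv⟩ := hNidx b' hbQ (by rw [← haw']; exact hadj')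
        have hji : j = ic := getVert_injOn' hQp j hjl ic hicl (by rw [hjv, hicv])
        have hj' : j = j1 ∨ j = j2 := by omega
        rcases hj' with h | h
        · exact ⟨haw', Or.inl (by rw [← hjv, h])⟩
        · exact ⟨haw', Or.inr (by rw [← hjv, h])⟩
      have hQQi : ∀ a b : W, (∃ ic, (ic ≤ j1 ∨ j2 ≤ ic) ∧ ic ≤ Q.length ∧ Q.getVert ic = a) →
          (∃ ic, (ic ≤ j1 ∨ j2 ≤ ic) ∧ ic ≤ Q.length ∧ Q.getVert ic = b) → H.Adj a b →
          ∃ i, i < Q.length ∧ s(a, b) = s(Q.getVert i, Q.getVert (i + 1)) ∧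
            (i ≤ j1 ∨ j2 ≤ i) ∧ (i + 1 ≤ j1 ∨ j2 ≤ i + 1) := by
        intro a b haQ hbQ hadj
        obtain ⟨ia, hiac, hial, hiav⟩ := haQ
        obtain ⟨ib, hibc, hibl, hibv⟩ := hbQ
        have haQs : a ∈ Q.support := hQmem.2 ⟨ia, hial, hiav⟩
        have hbQs : b ∈ Q.support := hQmem.2 ⟨ib, hibl, hibv⟩
        obtain ⟨i, hil, hse, hor⟩ := exists_consec_of_adj hQp hQmin haQs hbQs hadj
        refine ⟨i, hil, hse, ?_⟩
        rcases hor with ⟨h1, h2⟩ | ⟨h1, h2⟩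
        · exact ⟨hidx a ⟨ia, hiac, hial, hiav⟩ i (by omega) h1.symm,
            hidx b ⟨ib, hibc, hibl, hibv⟩ (i+1) (by omega) h2.symm⟩
        · exact ⟨hidx b ⟨ib, hibc, hibl, hibv⟩ i (by omega) h1.symm,
            hidx a ⟨ia, hiac, hial, hiav⟩ (i+1) (by omega) h2.symm⟩
      by_cases hcons : j2 = j1 + 1
      · -- B2a : triangle, type 2
        have hq1q2 : H.Adj (Q.getVert j1) (Q.getVert j2) := by
          rw [hcons]; exact Q.adj_getVert_succ (by omega)
        refine ⟨_, Or.inr ⟨w, Q.getVert j1, Q.getVert j2, R'.reverse, arcY, arcZ,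
          hR'p.reverse, harcYp, harcZp, hwq1, hq1q2, hwq2, ?_, ?_, ?_, fun v => Iff.rfl, ?_⟩⟩
        · intro v hv hv'
          rw [support_reverse, List.mem_reverse] at hv
          exact hR'Q v hv (harcYQ v hv')
        · intro v hv hv'
          rw [support_reverse, List.mem_reverse] at hv
          exact hR'Q v hv (harcZQ v hv')
        · intro v hv hv'
          have := (hYZ v hv hv').1; omega
        · intro a ha b hb hadj
          have hsp : ∀ c, (c ∈ R'.reverse.support ∨ c ∈ arcY.support ∨ c ∈ arcZ.support) →
              c ∈ R'.support ∨
                (∃ ic, (ic ≤ j1 ∨ j2 ≤ ic) ∧ ic ≤ Q.length ∧ Q.getVert ic = c) := by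
            rintro c (hc | hc | hc)
            · exact hsplit c (Or.inl (by rwa [support_reverse, List.mem_reverse] at hc))
            · exact hsplit c (Or.inr (Or.inl hc))
            · exact hsplit c (Or.inr (Or.inr hc))
          rcases hsp a ha with haR | haQ <;> rcases hsp b hb with hbR | hbQ
          · left; rw [edges_reverse, List.mem_reverse]; exact hRR a haR b hbR hadj
          · obtain ⟨hw', hb'⟩ := hmix a haR b hbQ hadj
            rcases hb' with h | h
            · right; right; right; left; rw [hw', h]
            · right; right; right; right; right; rw [hw', h]
          · obtain ⟨hw', hb'⟩ := hmix b hbR a haQ hadj.symm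
            rcases hb' with h | h
            · right; right; right; left; rw [Sym2.eq_swap, hw', h]
            · right; right; right; right; right; rw [Sym2.eq_swap, hw', h]
          · obtain ⟨i, hil, hse, hc1, hc2⟩ := hQQi a b haQ hbQ hadj
            have h3 : i + 1 ≤ j1 ∨ j2 ≤ i ∨ (i = j1 ∧ i + 1 = j2) := by omega
            rcases h3 with h | h | ⟨h1, h2⟩
            · right; left; rw [hse, harcYdef, edges_reverse, List.mem_reverse]
              exact edge_mem_ttake hj1l h
            · right; right; left; rw [hse, harcZdef]; exact edge_mem_ddrop h hil
            · right; right; right; right; left; rw [hse, h1, hcons]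
      · -- B2b : type 1 centred at w
        have hcons' : j1 + 1 < j2 := by omega
        refine ⟨_, Or.inl ⟨w, R'.reverse, Walk.cons hwq1 arcY, Walk.cons hwq2 arcZ,
          hR'p.reverse, harcYp.cons (fun h => hwQ (harcYQ w h)),
          harcZp.cons (fun h => hwQ (harcZQ w h)), ?_, ?_, ?_, fun v => Iff.rfl, ?_⟩⟩
        · intro v hv hv'
          rw [support_reverse, List.mem_reverse] at hv
          rw [support_cons, List.mem_cons] at hv'
          rcases hv' with hv' | hv'
          · exact hv'
          · exact absurd (harcYQ v hv') (hR'Q v hv)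
        · intro v hv hv'
          rw [support_reverse, List.mem_reverse] at hv
          rw [support_cons, List.mem_cons] at hv'
          rcases hv' with hv' | hv'
          · exact hv'
          · exact absurd (harcZQ v hv') (hR'Q v hv)
        · intro v hv hv'
          rw [support_cons, List.mem_cons] at hv hv'
          rcases hv with hv | hv
          · exact hv
          · rcases hv' with hv' | hv'
            · exact hv'
            · have := (hYZ v hv hv').1; omega
        · intro a ha b hb hadj
          have hsp : ∀ c, (c ∈ R'.reverse.support ∨
              c ∈ (Walk.cons hwq1 arcY).support ∨ c ∈ (Walk.cons hwq2 arcZ).support) →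
              c ∈ R'.support ∨
                (∃ ic, (ic ≤ j1 ∨ j2 ≤ ic) ∧ ic ≤ Q.length ∧ Q.getVert ic = c) := by
            rintro c (hc | hc | hc)
            · exact hsplit c (Or.inl (by rwa [support_reverse, List.mem_reverse] at hc))
            · rw [support_cons, List.mem_cons] at hc
              rcases hc with hc | hc
              · exact Or.inl (by rw [hc]; exact hwR')
              · exact hsplit c (Or.inr (Or.inl hc))
            · rw [support_cons, List.mem_cons] at hc
              rcases hc with hc | hc
              · exact Or.inl (by rw [hc]; exact hwR')
              · exact hsplit c (Or.inr (Or.inr hc))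
          have hmix' : ∀ a' b' : W, a' = w → (b' = Q.getVert j1 ∨ b' = Q.getVert j2) →
              s(a', b') ∈ (Walk.cons hwq1 arcY).edges ∨
              s(a', b') ∈ (Walk.cons hwq2 arcZ).edges := by
            rintro a' b' rfl (rfl | rfl)
            · left; rw [edges_cons, List.mem_cons]; left; rfl
            · right; rw [edges_cons, List.mem_cons]; left; rfl
          rcases hsp a ha with haR | haQ <;> rcases hsp b hb with hbR | hbQ
          · left; rw [edges_reverse, List.mem_reverse]; exact hRR a haR b hbR hadj
          · obtain ⟨hw', hb'⟩ := hmix a haR b hbQ hadj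
            rcases hmix' a b hw' hb' with h | h
            · right; left; exact h
            · right; right; exact h
          · obtain ⟨hw', hb'⟩ := hmix b hbR a haQ hadj.symm
            rw [Sym2.eq_swap]
            rcases hmix' b a hw' hb' with h | h
            · right; left; exact h
            · right; right; exact h
          · obtain ⟨i, hil, hse, hc1, hc2⟩ := hQQi a b haQ hbQ hadj
            have h3 : i + 1 ≤ j1 ∨ j2 ≤ i := by omega
            rcases h3 with h | h
            · right; left; rw [edges_cons, List.mem_cons]; right
              rw [hse, harcYdef, edges_reverse, List.mem_reverse]
              exact edge_mem_ttake hj1l h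
            · right; right; rw [edges_cons, List.mem_cons]; right
              rw [hse, harcZdef]; exact edge_mem_ddrop h hil

lemma isConfluence_induce_lift {V : Type*} (G : SimpleGraph V) (D : Set V) (T : Set D)
    (x y z : D) (h : IsConfluence (G.induce D) T x y z) :
    IsConfluence G (Subtype.val '' T) x y z := by
  let f : G.induce D →g G := (SimpleGraph.Embedding.induce D).toHom
  have hinj : Function.Injective f := Subtype.val_injective
  have hsup : ∀ (α β : D) (p : (G.induce D).Walk α β) (v : V),
      v ∈ (p.map f).support ↔ ∃ t, t ∈ p.support ∧ ↑t = v := by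
    intro α β p v
    rw [Walk.support_map, List.mem_map]
    exact Iff.rfl
  have hedge : ∀ (α β : D) (p : (G.induce D).Walk α β) (a b : D),
      s(a, b) ∈ p.edges → s((a : V), (b : V)) ∈ (p.map f).edges := by
    intro α β p a b he
    rw [Walk.edges_map, List.mem_map]
    exact ⟨s(a, b), he, Sym2.map_pair_eq _ _ _⟩
  have hadj' : ∀ a b : D, G.Adj ↑a ↑b → (G.induce D).Adj a b := fun a b hab => hab
  rcases h with ⟨c, px, py, pz, hpx, hpy, hpz, h1, h2, h3, hT, hE⟩ |
    ⟨x', y', z', px, py, pz, hpx, hpy, hpz, a1, a2, a3, h1, h2, h3, hT, hE⟩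
  · refine Or.inl ⟨↑c, px.map f, py.map f, pz.map f,
      Walk.map_isPath_of_injective hinj hpx, Walk.map_isPath_of_injective hinj hpy,
      Walk.map_isPath_of_injective hinj hpz, ?_, ?_, ?_, ?_, ?_⟩
    · intro v hv hv'
      obtain ⟨t1, ht1, rfl⟩ := (hsup _ _ _ _).1 hv
      obtain ⟨t2, ht2, he⟩ := (hsup _ _ _ _).1 hv'
      have : t2 = t1 := Subtype.val_injective he
      subst this
      rw [h1 t2 ht1 ht2]
    · intro v hv hv'
      obtain ⟨t1, ht1, rfl⟩ := (hsup _ _ _ _).1 hv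
      obtain ⟨t2, ht2, he⟩ := (hsup _ _ _ _).1 hv'
      have : t2 = t1 := Subtype.val_injective he
      subst this
      rw [h2 t2 ht1 ht2]
    · intro v hv hv'
      obtain ⟨t1, ht1, rfl⟩ := (hsup _ _ _ _).1 hv
      obtain ⟨t2, ht2, he⟩ := (hsup _ _ _ _).1 hv'
      have : t2 = t1 := Subtype.val_injective he
      subst this
      rw [h3 t2 ht1 ht2]
    · intro v
      constructor
      · rintro ⟨t, ht, rfl⟩
        rcases (hT t).1 ht with h | h | h
        · exact Or.inl ((hsup _ _ _ _).2 ⟨t, h, rfl⟩)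
        · exact Or.inr (Or.inl ((hsup _ _ _ _).2 ⟨t, h, rfl⟩))
        · exact Or.inr (Or.inr ((hsup _ _ _ _).2 ⟨t, h, rfl⟩))
      · rintro (h | h | h) <;> obtain ⟨t, ht, rfl⟩ := (hsup _ _ _ _).1 h
        · exact ⟨t, (hT t).2 (Or.inl ht), rfl⟩
        · exact ⟨t, (hT t).2 (Or.inr (Or.inl ht)), rfl⟩
        · exact ⟨t, (hT t).2 (Or.inr (Or.inr ht)), rfl⟩
    · rintro a ⟨ta, hta, rfl⟩ b ⟨tb, htb, rfl⟩ hab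
      rcases hE ta hta tb htb (hadj' ta tb hab) with h | h | h
      · exact Or.inl (hedge _ _ _ _ _ h)
      · exact Or.inr (Or.inl (hedge _ _ _ _ _ h))
      · exact Or.inr (Or.inr (hedge _ _ _ _ _ h))
  · refine Or.inr ⟨↑x', ↑y', ↑z', px.map f, py.map f, pz.map f,
      Walk.map_isPath_of_injective hinj hpx, Walk.map_isPath_of_injective hinj hpy,
      Walk.map_isPath_of_injective hinj hpz, a1, a2, a3, ?_, ?_, ?_, ?_, ?_⟩
    · intro v hv hv'
      obtain ⟨t1, ht1, rfl⟩ := (hsup _ _ _ _).1 hv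
      obtain ⟨t2, ht2, he⟩ := (hsup _ _ _ _).1 hv'
      exact h1 t1 ht1 (Subtype.val_injective he ▸ ht2)
    · intro v hv hv'
      obtain ⟨t1, ht1, rfl⟩ := (hsup _ _ _ _).1 hv
      obtain ⟨t2, ht2, he⟩ := (hsup _ _ _ _).1 hv'
      exact h2 t1 ht1 (Subtype.val_injective he ▸ ht2)
    · intro v hv hv'
      obtain ⟨t1, ht1, rfl⟩ := (hsup _ _ _ _).1 hv
      obtain ⟨t2, ht2, he⟩ := (hsup _ _ _ _).1 hv'
      exact h3 t1 ht1 (Subtype.val_injective he ▸ ht2)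
    · intro v
      constructor
      · rintro ⟨t, ht, rfl⟩
        rcases (hT t).1 ht with h | h | h
        · exact Or.inl ((hsup _ _ _ _).2 ⟨t, h, rfl⟩)
        · exact Or.inr (Or.inl ((hsup _ _ _ _).2 ⟨t, h, rfl⟩))
        · exact Or.inr (Or.inr ((hsup _ _ _ _).2 ⟨t, h, rfl⟩))
      · rintro (h | h | h) <;> obtain ⟨t, ht, rfl⟩ := (hsup _ _ _ _).1 h
        · exact ⟨t, (hT t).2 (Or.inl ht), rfl⟩
        · exact ⟨t, (hT t).2 (Or.inr (Or.inl ht)), rfl⟩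
        · exact ⟨t, (hT t).2 (Or.inr (Or.inr ht)), rfl⟩
    · rintro a ⟨ta, hta, rfl⟩ b ⟨tb, htb, rfl⟩ hab
      rcases hE ta hta tb htb (hadj' ta tb hab) with h | h | h | h | h | h
      · exact Or.inl (hedge _ _ _ _ _ h)
      · exact Or.inr (Or.inl (hedge _ _ _ _ _ h))
      · exact Or.inr (Or.inr (Or.inl (hedge _ _ _ _ _ h)))
      · refine Or.inr (Or.inr (Or.inr (Or.inl ?_)))
        have := congrArg (Sym2.map (f : D → V)) h
        rwa [Sym2.map_pair_eq, Sym2.map_pair_eq] at this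
      · refine Or.inr (Or.inr (Or.inr (Or.inr (Or.inl ?_))))
        have := congrArg (Sym2.map (f : D → V)) h
        rwa [Sym2.map_pair_eq, Sym2.map_pair_eq] at this
      · refine Or.inr (Or.inr (Or.inr (Or.inr (Or.inr ?_))))
        have := congrArg (Sym2.map (f : D → V)) h
        rwa [Sym2.map_pair_eq, Sym2.map_pair_eq] at this

lemma mem_of_isConfluence' {V : Type*} {G : SimpleGraph V} {T : Set V} {x y z : V}
    (h : IsConfluence G T x y z) : x ∈ T ∧ y ∈ T ∧ z ∈ T := by
  rcases h with ⟨c, px, py, pz, _, _, _, _, _, _, hT, _⟩ |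
    ⟨x', y', z', px, py, pz, _, _, _, _, _, _, _, _, _, hT, _⟩ <;>
  exact ⟨(hT x).2 (Or.inl px.end_mem_support),
    (hT y).2 (Or.inr (Or.inl py.end_mem_support)),
    (hT z).2 (Or.inr (Or.inr pz.end_mem_support))⟩


theorem exists_confluence {V : Type*} (G : SimpleGraph V) (u : V) (i : ℕ) (hi : 1 ≤ i)
    (x y z : V) (hx : G.dist u x = i) (hx' : G.Reachable u x)
    (hy : G.dist u y = i) (hy' : G.Reachable u y)
    (hz : G.dist u z = i) (hz' : G.Reachable u z)
    (hxy : x ≠ y) (hxz : x ≠ z) (hyz : y ≠ z) :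
    ∃ S : Set V, S ⊆ {v | G.Reachable u v ∧ G.dist u v ≤ i - 1} ∧
      IsConfluence G (S ∪ {x, y, z}) x y z := by
  classical
  set D : Set V := {v | G.Reachable u v ∧ G.dist u v ≤ i - 1} ∪ {x, y, z} with hD
  have hxD : x ∈ D := Or.inr (by simp)
  have hyD : y ∈ D := Or.inr (by simp)
  have hzD : z ∈ D := Or.inr (by simp)
  have huD : u ∈ D := Or.inl ⟨Reachable.refl u, by rw [SimpleGraph.dist_self]; omega⟩
  have hind : ∀ (a b : V) (p : G.Walk a b), (∀ v ∈ p.support, v ∈ D) →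
      ∀ (ha : a ∈ D) (hb : b ∈ D), (G.induce D).Reachable ⟨a, ha⟩ ⟨b, hb⟩ := by
    intro a b p
    induction p with
    | nil => intro _ ha hb; exact Reachable.refl _
    | @cons a c b hadj q ih =>
      intro hp ha hb
      have hcD : c ∈ D := hp c (by simp)
      have hstep : (G.induce D).Adj ⟨a, ha⟩ ⟨c, hcD⟩ := hadj
      exact hstep.reachable.trans (ih (fun v hv => hp v (by simp [hv])) hcD hb)
  have hreach : ∀ (a : V), G.dist u a = i → G.Reachable u a → ∀ (ha : a ∈ D),
      (G.induce D).Reachable ⟨u, huD⟩ ⟨a, ha⟩ := by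
    intro a hda hra ha
    obtain ⟨p, hp, hpl⟩ := hra.exists_path_of_dist
    refine hind u a p ?_ huD ha
    intro v hv
    obtain ⟨k, hkv, hkl⟩ := Walk.mem_support_iff_exists_getVert.1 hv
    rcases eq_or_lt_of_le hkl with he | hlt
    · rw [he, Walk.getVert_length] at hkv
      rw [← hkv]; exact ha
    · refine Or.inl ⟨⟨(p.ttake k).copy rfl hkv⟩, ?_⟩
      have := SimpleGraph.dist_le ((p.ttake k).copy rfl hkv)
      rw [Walk.length_copy, Walk.length_ttake p k (by omega)] at this
      omega
  have hxyI : (G.induce D).Reachable ⟨x, hxD⟩ ⟨y, hyD⟩ :=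
    ((hreach x hx hx' hxD).symm).trans (hreach y hy hy' hyD)
  have hyzI : (G.induce D).Reachable ⟨y, hyD⟩ ⟨z, hzD⟩ :=
    ((hreach y hy hy' hyD).symm).trans (hreach z hz hz' hzD)
  obtain ⟨T, hT⟩ := exists_confluence_aux (G.induce D) ⟨x, hxD⟩ ⟨y, hyD⟩ ⟨z, hzD⟩ hxyI hyzI
  have hTG : IsConfluence G (Subtype.val '' T) x y z :=
    isConfluence_induce_lift G D T ⟨x, hxD⟩ ⟨y, hyD⟩ ⟨z, hzD⟩ hT
  obtain ⟨hxT, hyT, hzT⟩ := mem_of_isConfluence' hTG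
  refine ⟨(Subtype.val '' T) \ {x, y, z}, ?_, ?_⟩
  · rintro v ⟨⟨t, ht, rfl⟩, hnot⟩
    rcases t.2 with h | h
    · exact h
    · exact absurd h hnot
  · have hset : (Subtype.val '' T) \ {x, y, z} ∪ {x, y, z} = Subtype.val '' T := by
      apply Set.diff_union_of_subset
      intro v hv
      rcases hv with rfl | rfl | rfl
      · exact hxT
      · exact hyT
      · exact hzT
    rw [hset]
    exact hTG
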